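/- Let γ ∈ ℝ, let I ⊆ ℝ be an interval, and let (Ω, Σ, K) : I → ℝ³ be differentiable and satisfy (Ω', Σ', K') = G_γ(Ω, Σ, K) on I. Define Z = 1 − Ω² − Σ² − K. Then Z is differentiable on I and satisfies, for all t ∈ I, Z'(t) = Z(t)·( 3Ω(t)² + 6Σ(t)² + 2K(t) − 3γ·(Ω(t)² + Σ(t)² + K(t)) ). -/

import Mathlib

/-- The averaged Bianchi V guiding vector field `G_γ(Ω, Σ, K)`. -/
noncomputable def GBV (γ : ℝ) : ℝ × ℝ × ℝ → ℝ × ℝ × ℝ := fun p =>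
  (-(1 / 2) * p.1 *
      (3 * γ * (p.2.1 ^ 2 + p.1 ^ 2 + p.2.2 - 1) - 6 * p.2.1 ^ 2 - 3 * p.1 ^ 2
        - 2 * p.2.2 + 3),
   (1 / 2) * p.2.1 *
      (-(3 * γ) * (p.2.1 ^ 2 + p.1 ^ 2 + p.2.2 - 1) + 6 * p.2.1 ^ 2 + 3 * p.1 ^ 2
        + 2 * p.2.2 - 6),
   -p.2.2 *
      (3 * γ * (p.2.1 ^ 2 + p.1 ^ 2 + p.2.2 - 1) - 6 * p.2.1 ^ 2 - 3 * p.1 ^ 2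
        - 2 * p.2.2 + 2))

/-- Along any solution `(Ω, Σ, K)` of the averaged Bianchi V guiding system on
an interval `I`, the quantity `Z = 1 - Ω² - Σ² - K` is differentiable and
satisfies `Z' = Z (3Ω² + 6Σ² + 2K - 3γ(Ω² + Σ² + K))`. -/
theorem bianchiV_Z_evolution (γ : ℝ) (I : Set ℝ) (hI : I.OrdConnected)
    (Ω S K : ℝ → ℝ)
    (hode : ∀ t ∈ I,
      HasDerivAt (fun t => (Ω t, S t, K t)) (GBV γ (Ω t, S t, K t)) t) :
    ∀ t ∈ I,
      HasDerivAt (fun t => 1 - (Ω t) ^ 2 - (S t) ^ 2 - K t)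
        ((1 - (Ω t) ^ 2 - (S t) ^ 2 - K t) *
          (3 * (Ω t) ^ 2 + 6 * (S t) ^ 2 + 2 * K t -
            3 * γ * ((Ω t) ^ 2 + (S t) ^ 2 + K t))) t := by
  intro t ht
  have h := hode t ht
  have hΩ : HasDerivAt Ω (GBV γ (Ω t, S t, K t)).1 t := h.fst
  have hS : HasDerivAt S (GBV γ (Ω t, S t, K t)).2.1 t := h.snd.fst
  have hK : HasDerivAt K (GBV γ (Ω t, S t, K t)).2.2 t := h.snd.snd
  have hd : HasDerivAt (fun t => 1 - (Ω t) ^ 2 - (S t) ^ 2 - K t)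
      (0 - 2 * Ω t ^ 1 * (GBV γ (Ω t, S t, K t)).1
        - 2 * S t ^ 1 * (GBV γ (Ω t, S t, K t)).2.1
        - (GBV γ (Ω t, S t, K t)).2.2) t := by
    have := (((hasDerivAt_const t (1:ℝ)).sub (hΩ.pow 2)).sub (hS.pow 2)).sub hK
    simp at this ⊢
    exact this
  convert hd using 1
  simp only [GBV]
  ring
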